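/- The codewords G(a_0,a_1) = {(x, a_0x + a_1x^2) : x ∈ W} of the lifted Gabidulin code cover every 2-dimensional subspace L of W × F_16 with L ∩ ({0} × F_16) = {0}: each such 'line disjoint from the special solid' is contained in exactly one codeword, and the total count is 7·256 = 1792. -/

import Mathlib

/-- The field `F_16`, a `4`-dimensional vector space over `F_2`. -/
abbrev F16 := GaloisField 2 4

/-- The `F_2`-linear endomorphism of `F_16` induced by `a_0 x + a_1 x^2`. -/
noncomputable def lmap (a0 a1 : F16) : F16 →ₗ[ZMod 2] F16 where
  toFun x := a0 * x + a1 * x ^ 2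
  map_add' x y := by
    have h : (x + y) ^ 2 = x ^ 2 + y ^ 2 := CharTwo.add_sq x y
    show a0 * (x + y) + a1 * (x + y) ^ 2 = (a0 * x + a1 * x ^ 2) + (a0 * y + a1 * y ^ 2)
    rw [h]; ring
  map_smul' c x := by
    simp only [RingHom.id_apply, Algebra.smul_def, mul_pow]
    have hc : (algebraMap (ZMod 2) F16 c) ^ 2 = algebraMap (ZMod 2) F16 c := by
      rw [← map_pow]; congr 1; revert c; decide
    rw [hc]; ring

/-- The codeword `G(a_0, a_1) = {(x, a_0 x + a_1 x^2) : x ∈ W}`, as a subspace of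
`W × F_16`. -/
noncomputable def Gc (W : Submodule (ZMod 2) F16) (a0 a1 : F16) :
    Submodule (ZMod 2) (↥W × F16) :=
  LinearMap.graph ((lmap a0 a1).comp W.subtype)

/-- The special solid `S = {0} × F_16` inside `W × F_16`. -/
noncomputable def specialSolid (W : Submodule (ZMod 2) F16) :
    Submodule (ZMod 2) (↥W × F16) :=
  (⊥ : Submodule (ZMod 2) ↥W).prod (⊤ : Submodule (ZMod 2) F16)


lemma span_basis_coe {R M : Type*} [Ring R] [AddCommGroup M] [Module R M]
    (L : Submodule R M) (b : Module.Basis (Fin 2) R L) :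
    Submodule.span R {((b 0 : L) : M), ((b 1 : L) : M)} = L := by
  have h1 : Submodule.map L.subtype (Submodule.span R (Set.range b)) = L := by
    rw [b.span_eq, Submodule.map_top, Submodule.range_subtype]
  rw [Submodule.map_span] at h1
  have h2 : L.subtype '' Set.range b = {((b 0 : L) : M), ((b 1 : L) : M)} := by
    ext x
    simp only [Set.mem_image, Set.mem_range, Set.mem_insert_iff, Set.mem_singleton_iff]
    constructor
    · rintro ⟨y, ⟨i, rfl⟩, rfl⟩
      fin_cases i <;> simp
    · rintro (rfl | rfl)
      exacts [⟨b 0, ⟨0, rfl⟩, rfl⟩, ⟨b 1, ⟨1, rfl⟩, rfl⟩]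
  rw [h2] at h1
  exact h1

lemma exists_basis_data (W : Submodule (ZMod 2) F16) (L : Submodule (ZMod 2) (↥W × F16))
    (hL2 : Module.finrank (ZMod 2) L = 2) (hLS : L ⊓ specialSolid W = ⊥) :
    ∃ p0 p1 : ↥W × F16, p0 ∈ L ∧ p1 ∈ L ∧ Submodule.span (ZMod 2) {p0, p1} = L ∧
      (p0.1 : F16) ≠ 0 ∧ (p1.1 : F16) ≠ 0 ∧ (p0.1 : F16) ≠ (p1.1 : F16) := by
  haveI : Module.Finite (ZMod 2) L := Module.Finite.of_finite
  let b := Module.finBasisOfFinrankEq (ZMod 2) L hL2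
  have memS : ∀ x : ↥W × F16, x ∈ L → (x.1 : F16) = 0 → x = 0 := by
    intro x hxL hx1
    have h1 : x.1 = 0 := ZeroMemClass.coe_eq_zero.mp hx1
    have : x ∈ L ⊓ specialSolid W :=
      ⟨hxL, Submodule.mem_prod.mpr ⟨by simp [h1], trivial⟩⟩
    rw [hLS] at this
    exact this
  refine ⟨(b 0 : L), (b 1 : L), (b 0).2, (b 1).2, span_basis_coe L b, ?_, ?_, ?_⟩
  · intro h
    have := memS _ (b 0).2 h
    exact b.ne_zero 0 (ZeroMemClass.coe_eq_zero.mp this)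
  · intro h
    have := memS _ (b 1).2 h
    exact b.ne_zero 1 (ZeroMemClass.coe_eq_zero.mp this)
  · intro h
    have hsum : ((b 0 : L) : ↥W × F16) + (b 1 : L) = 0 := by
      apply memS _ (L.add_mem (b 0).2 (b 1).2)
      show ((((b 0 : L) : ↥W × F16).1 + ((b 1 : L) : ↥W × F16).1 : ↥W) : F16) = 0
      rw [Submodule.coe_add, h]
      exact CharTwo.add_self_eq_zero _
    have hb : (b 0 + b 1 : ↥L) = 0 := by
      apply Subtype.ext
      rw [Submodule.coe_add, ZeroMemClass.coe_zero]
      exact hsum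
    have hzero : ∑ i : Fin 2, (1 : ZMod 2) • b i = 0 := by
      rw [Fin.sum_univ_two, one_smul, one_smul]
      exact hb
    have hli := Fintype.linearIndependent_iff.mp b.linearIndependent (fun _ => 1) hzero 0
    exact one_ne_zero hli


lemma two_zero : (2 : F16) = 0 := by
  have := CharP.cast_eq_zero F16 2
  simpa using this

lemma interp {u v : F16} (hu : u ≠ 0) (hv : v ≠ 0) (huv : u ≠ v) (y z : F16) :
    ∃! p : F16 × F16, p.1 * u + p.2 * u ^ 2 = y ∧ p.1 * v + p.2 * v ^ 2 = z := by
  have hd : u * v ^ 2 + u ^ 2 * v ≠ 0 := by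
    have h1 : u * v ^ 2 + u ^ 2 * v = u * v * (v - u) := by
      have : (v : F16) - u = v + u := by
        rw [sub_eq_add_neg, CharTwo.neg_eq]
      rw [this]; ring
    rw [h1]
    exact mul_ne_zero (mul_ne_zero hu hv) (sub_ne_zero.mpr (Ne.symm huv))
  set d := u * v ^ 2 + u ^ 2 * v with hdef
  refine ⟨((y * v ^ 2 + z * u ^ 2) / d, (y * v + z * u) / d), ⟨?_, ?_⟩, ?_⟩
  · field_simp
    linear_combination (z * u ^ 3) * two_zero
  · field_simp
    linear_combination (y * v ^ 3) * two_zero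
  · rintro ⟨a0, a1⟩ ⟨h1, h2⟩
    have e0 : a0 = (y * v ^ 2 + z * u ^ 2) / d := by
      rw [eq_div_iff hd]
      linear_combination v ^ 2 * h1 + u ^ 2 * h2 - (a1 * u ^ 2 * v ^ 2) * two_zero
    have e1 : a1 = (y * v + z * u) / d := by
      rw [eq_div_iff hd]
      linear_combination v * h1 + u * h2 - (a0 * u * v) * two_zero
    simp [Prod.ext_iff, e0, e1]

lemma mem_Gc_iff (W : Submodule (ZMod 2) F16) (a0 a1 : F16) (p : ↥W × F16) :
    p ∈ Gc W a0 a1 ↔ a0 * (p.1 : F16) + a1 * (p.1 : F16) ^ 2 = p.2 := by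
  rw [Gc, LinearMap.mem_graph_iff]
  exact eq_comm

lemma part1 (W : Submodule (ZMod 2) F16) (L : Submodule (ZMod 2) (↥W × F16))
    (hL2 : Module.finrank (ZMod 2) L = 2) (hLS : L ⊓ specialSolid W = ⊥) :
    ∃! p : F16 × F16, L ≤ Gc W p.1 p.2 := by
  obtain ⟨p0, p1, h0, h1, hspan, hu, hv, huv⟩ := exists_basis_data W L hL2 hLS
  have key := interp hu hv huv p0.2 p1.2
  refine (existsUnique_congr ?_).mp key
  rintro ⟨a0, a1⟩
  rw [← hspan, Submodule.span_le]
  simp only [Set.insert_subset_iff, Set.singleton_subset_iff, SetLike.mem_coe,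
    mem_Gc_iff]


-- number of 2-dim subspaces of a 3-dim space over ZMod 2
lemma card_dim2 (V : Type*) [AddCommGroup V] [Module (ZMod 2) V]
    [FiniteDimensional (ZMod 2) V] (hV : Module.finrank (ZMod 2) V = 3) :
    Nat.card {U : Submodule (ZMod 2) V // Module.finrank (ZMod 2) U = 2} = 7 := by
  set D := Module.Dual (ZMod 2) V with hD
  have hker : ∀ φ : D, φ ≠ 0 → Module.finrank (ZMod 2) (LinearMap.ker φ) = 2 := by
    intro φ hφ
    have h1 := LinearMap.finrank_range_add_finrank_ker φ
    have h2 : Module.finrank (ZMod 2) (LinearMap.range φ) = 1 := by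
      have hle : Module.finrank (ZMod 2) (LinearMap.range φ) ≤ 1 := by
        have := Submodule.finrank_le (LinearMap.range φ)
        simpa using this
      have hne : LinearMap.range φ ≠ ⊥ := by
        intro h
        exact hφ (LinearMap.range_eq_bot.mp h)
      have hz : Module.finrank (ZMod 2) (LinearMap.range φ) ≠ 0 := by
        intro h
        exact hne (Submodule.finrank_eq_zero.mp h)
      omega
    rw [h2, hV] at h1
    omega
  have hbij : Function.Bijective
      (fun φ : {φ : D // φ ≠ 0} =>
        (⟨LinearMap.ker φ.1, hker φ.1 φ.2⟩ :
          {U : Submodule (ZMod 2) V // Module.finrank (ZMod 2) U = 2})) := by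
    constructor
    · rintro ⟨φ, hφ⟩ ⟨ψ, hψ⟩ h
      simp only [Subtype.mk_eq_mk] at h ⊢
      ext x
      have hx : φ x = 0 ↔ ψ x = 0 := by
        rw [← LinearMap.mem_ker, ← LinearMap.mem_ker, h]
      have : ∀ a b : ZMod 2, (a = 0 ↔ b = 0) → a = b := by decide
      exact this _ _ hx
    · rintro ⟨U, hU⟩
      have hq : Module.finrank (ZMod 2) (V ⧸ U) = 1 := by
        have := Submodule.finrank_quotient_add_finrank U
        rw [hU, hV] at this
        omega
      let c := Module.finBasisOfFinrankEq (ZMod 2) (V ⧸ U) hq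
      have hcker : LinearMap.ker (c.coord 0) = ⊥ := by
        rw [LinearMap.ker_eq_bot']
        intro m hm
        have := c.sum_repr m
        rw [Fin.sum_univ_one] at this
        have hc : c.repr m 0 = 0 := hm
        rw [hc, zero_smul] at this
        exact this.symm
      refine ⟨⟨(c.coord 0).comp U.mkQ, ?_⟩, ?_⟩
      · intro h
        have h0 : LinearMap.ker ((c.coord 0).comp U.mkQ) = ⊤ := by
          rw [h]; exact LinearMap.ker_zero
        rw [LinearMap.ker_comp, hcker, Submodule.comap_bot, Submodule.ker_mkQ] at h0
        rw [h0] at hU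
        rw [finrank_top] at hU
        rw [hV] at hU
        omega
      · simp only [Subtype.mk_eq_mk]
        rw [LinearMap.ker_comp, hcker, Submodule.comap_bot, Submodule.ker_mkQ]
  have := Nat.card_eq_of_bijective _ hbij
  rw [← this]
  classical
  haveI : Finite D := Module.finite_of_finite (ZMod 2)
  haveI : Fintype D := Fintype.ofFinite D
  have hcD : Fintype.card D = 8 := by
    have := Module.card_eq_pow_finrank (K := ZMod 2) (V := D)
    rw [Subspace.dual_finrank_eq, hV, ZMod.card] at this
    simpa using this
  rw [Nat.card_eq_fintype_card]
  have h1 : Fintype.card {φ : D // φ ≠ 0} = Fintype.card D - Fintype.card {φ : D // φ = 0} := by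
    exact Fintype.card_subtype_compl _
  rw [h1, hcD, Fintype.card_subtype_eq]


noncomputable def gmap (W : Submodule (ZMod 2) F16) (a0 a1 : F16) :
    ↥W →ₗ[ZMod 2] ↥W × F16 :=
  LinearMap.prod LinearMap.id ((lmap a0 a1).comp W.subtype)

lemma gmap_fst (W : Submodule (ZMod 2) F16) (a0 a1 : F16) (x : ↥W) :
    (gmap W a0 a1 x).1 = x := rfl

lemma gmap_snd (W : Submodule (ZMod 2) F16) (a0 a1 : F16) (x : ↥W) :
    (gmap W a0 a1 x).2 = a0 * (x : F16) + a1 * (x : F16) ^ 2 := rfl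

lemma gmap_inj (W : Submodule (ZMod 2) F16) (a0 a1 : F16) :
    Function.Injective (gmap W a0 a1) := fun x y h => by
  have := congrArg Prod.fst h
  simpa [gmap_fst] using this

lemma fst_comp_gmap (W : Submodule (ZMod 2) F16) (a0 a1 : F16) :
    (LinearMap.fst (ZMod 2) ↥W F16).comp (gmap W a0 a1) = LinearMap.id := rfl

noncomputable def psi (W : Submodule (ZMod 2) F16)
    (x : (F16 × F16) × {U : Submodule (ZMod 2) ↥W // Module.finrank (ZMod 2) U = 2}) :
    Submodule (ZMod 2) (↥W × F16) :=
  Submodule.map (gmap W x.1.1 x.1.2) x.2.1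

lemma psi_mem (W : Submodule (ZMod 2) F16) (x) :
    Module.finrank (ZMod 2) (psi W x) = 2 ∧ psi W x ⊓ specialSolid W = ⊥ := by
  obtain ⟨⟨a0, a1⟩, U, hU⟩ := x
  constructor
  · have e := Submodule.equivMapOfInjective (gmap W a0 a1) (gmap_inj W a0 a1) U
    rw [psi, ← e.finrank_eq, hU]
  · rw [eq_bot_iff]
    rintro ⟨x1, x2⟩ ⟨hmem, hS⟩
    obtain ⟨w, hw, heq⟩ := hmem
    obtain ⟨hS1, -⟩ := Submodule.mem_prod.mp hS
    have hx1 : x1 = 0 := by simpa using hS1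
    have hw0 : w = 0 := by
      have := congrArg Prod.fst heq
      simpa [gmap_fst, hx1] using this
    rw [hw0, map_zero] at heq
    rw [← heq]
    exact Submodule.zero_mem ⊥

lemma psi_surj (W : Submodule (ZMod 2) F16) (L : Submodule (ZMod 2) (↥W × F16))
    (hL2 : Module.finrank (ZMod 2) L = 2) (hLS : L ⊓ specialSolid W = ⊥) :
    ∃ x, psi W x = L := by
  obtain ⟨p0, p1, h0, h1, hspan, hu, hv, huv⟩ := exists_basis_data W L hL2 hLS
  obtain ⟨⟨a0, a1⟩, ⟨e0, e1⟩, -⟩ := interp hu hv huv p0.2 p1.2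
  have hli : LinearIndependent (ZMod 2) ![p0.1, p1.1] := by
    rw [Fintype.linearIndependent_iff]
    intro g hg
    rw [Fin.sum_univ_two] at hg
    simp only [Matrix.cons_val_zero, Matrix.cons_val_one, Matrix.head_cons] at hg
    have two_cases : ∀ c : ZMod 2, c = 0 ∨ c = 1 := by decide
    have key : g 0 = 0 ∧ g 1 = 0 := by
      rcases two_cases (g 0) with hg0 | hg0 <;> rcases two_cases (g 1) with hg1 | hg1
      · exact ⟨hg0, hg1⟩
      · rw [hg0, hg1, zero_smul, one_smul, zero_add] at hg
        exact absurd (by rw [hg]; simp) hv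
      · rw [hg0, hg1, zero_smul, one_smul, add_zero] at hg
        exact absurd (by rw [hg]; simp) hu
      · rw [hg0, hg1, one_smul, one_smul] at hg
        exfalso
        apply huv
        have : ((p0.1 : F16) + (p1.1 : F16)) = 0 := by
          rw [← Submodule.coe_add, hg, ZeroMemClass.coe_zero]
        rw [← CharTwo.neg_eq (p1.1 : F16)]
        exact eq_neg_of_add_eq_zero_left this
    intro i
    fin_cases i
    · exact key.1
    · exact key.2
  have hUrank : Module.finrank (ZMod 2)
      (Submodule.span (ZMod 2) (Set.range ![p0.1, p1.1])) = 2 := by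
    rw [finrank_span_eq_card hli, Fintype.card_fin]
  refine ⟨⟨(a0, a1), ⟨Submodule.span (ZMod 2) (Set.range ![p0.1, p1.1]), hUrank⟩⟩, ?_⟩
  rw [psi]
  simp only
  rw [Submodule.map_span, ← hspan]
  congr 1
  have hr : Set.range ![p0.1, p1.1] = {p0.1, p1.1} := by
    rw [Matrix.range_cons, Matrix.range_cons_empty]
    rfl
  rw [hr, Set.image_insert_eq, Set.image_singleton]
  have hg0 : gmap W a0 a1 p0.1 = p0 := by
    ext
    · rfl
    · exact e0
  have hg1 : gmap W a0 a1 p1.1 = p1 := by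
    ext
    · rfl
    · exact e1
  rw [hg0, hg1]

lemma psi_inj (W : Submodule (ZMod 2) F16) : Function.Injective (psi W) := by
  rintro ⟨⟨a0, a1⟩, U, hU⟩ ⟨⟨a0', a1'⟩, U', hU'⟩ h
  simp only [psi] at h
  have hUeq : U = U' := by
    have h2 := congrArg (Submodule.map (LinearMap.fst (ZMod 2) ↥W F16)) h
    rw [← Submodule.map_comp, ← Submodule.map_comp, fst_comp_gmap, fst_comp_gmap,
      Submodule.map_id, Submodule.map_id] at h2
    exact h2
  subst hUeq
  haveI : Module.Finite (ZMod 2) U := Module.Finite.of_finite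
  let c := Module.finBasisOfFinrankEq (ZMod 2) U hU
  -- the two basis vectors, as elements of F16
  set x0 : ↥W := (↑(c 0) : ↥W) with hx0
  set x1 : ↥W := (↑(c 1) : ↥W) with hx1
  have hm0 : x0 ∈ U := (c 0 : ↥U).2
  have hm1 : x1 ∈ U := (c 1 : ↥U).2
  have hu : (x0 : F16) ≠ 0 := by
    intro hzero
    have : x0 = 0 := ZeroMemClass.coe_eq_zero.mp hzero
    have : (c 0 : ↥U) = 0 := ZeroMemClass.coe_eq_zero.mp this
    exact c.ne_zero 0 this
  have hv : (x1 : F16) ≠ 0 := by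
    intro hzero
    have : x1 = 0 := ZeroMemClass.coe_eq_zero.mp hzero
    have : (c 1 : ↥U) = 0 := ZeroMemClass.coe_eq_zero.mp this
    exact c.ne_zero 1 this
  have huv : (x0 : F16) ≠ (x1 : F16) := by
    intro heq
    have h1 : x0 = x1 := Subtype.ext heq
    have h2 : (c 0 : ↥U) = c 1 := Subtype.ext h1
    have := c.injective h2
    simp at this
  -- agreement of the two linear maps on x0 and x1
  have agree : ∀ x : ↥W, x ∈ U →
      a0 * (x : F16) + a1 * (x : F16) ^ 2 = a0' * (x : F16) + a1' * (x : F16) ^ 2 := by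
    intro x hx
    have hmem : gmap W a0 a1 x ∈ Submodule.map (gmap W a0' a1') U := by
      rw [← h]
      exact ⟨x, hx, rfl⟩
    obtain ⟨w, hw, heq⟩ := hmem
    have hwx : w = x := by
      have := congrArg Prod.fst heq
      simpa [gmap_fst] using this
    have := congrArg Prod.snd heq
    rw [hwx] at this
    rw [gmap_snd, gmap_snd] at this
    exact this.symm
  have key := interp hu hv huv (a0 * (x0 : F16) + a1 * (x0 : F16) ^ 2)
    (a0 * (x1 : F16) + a1 * (x1 : F16) ^ 2)
  have hp : (a0, a1) = (a0', a1') := by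
    apply key.unique
    · exact ⟨rfl, rfl⟩
    · exact ⟨(agree x0 hm0).symm, (agree x1 hm1).symm⟩
  simp only [Prod.mk.injEq] at hp
  simp [hp.1, hp.2]

/-- The lifted Gabidulin code covers each of the `1792` lines of `W × F_16` disjoint from the
special solid `S = {0} × F_16` exactly once. -/
theorem lifted_gabidulin_covers_free_lines (W : Submodule (ZMod 2) F16)
    (hW : Module.finrank (ZMod 2) W = 3) :
    (∀ L : Submodule (ZMod 2) (↥W × F16), Module.finrank (ZMod 2) L = 2 →
        L ⊓ specialSolid W = ⊥ → ∃! p : F16 × F16, L ≤ Gc W p.1 p.2) ∧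
      {L : Submodule (ZMod 2) (↥W × F16) |
        Module.finrank (ZMod 2) L = 2 ∧ L ⊓ specialSolid W = ⊥}.ncard = 1792 := by
  constructor
  · intro L h2 hS
    exact part1 W L h2 hS
  · have hset : {L : Submodule (ZMod 2) (↥W × F16) |
        Module.finrank (ZMod 2) L = 2 ∧ L ⊓ specialSolid W = ⊥} = Set.range (psi W) := by
      ext L
      constructor
      · rintro ⟨h2, hS⟩
        exact psi_surj W L h2 hS
      · rintro ⟨x, rfl⟩
        exact psi_mem W x
    rw [hset, ← Nat.card_coe_set_eq,
      Nat.card_congr (Equiv.ofInjective (psi W) (psi_inj W)).symm, Nat.card_prod,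
      Nat.card_prod]
    haveI : Fintype F16 := Fintype.ofFinite F16
    have hF : Nat.card F16 = 16 := by
      rw [Nat.card_eq_fintype_card, Module.card_eq_pow_finrank (K := ZMod 2) (V := F16),
        GaloisField.finrank 2 (by norm_num), ZMod.card]
      norm_num
    rw [hF, card_dim2 ↥W hW]
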